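/- Let G=(V,E) be a finite connected undirected simple graph on n vertices, let r > 1 be real, and let f be the fixation function for the generalized Moran process on G with fitness r. Then f_r(G) = (1/n)·Σ_{v∈V} f({v}) ≥ (r−1)/(r + Δ(G)/δ(G)), where Δ(G) and δ(G) denote the maximum and minimum degree of G respectively. -/

import Mathlib

set_option maxHeartbeats 1000000
set_option maxHeartbeats 1000000

noncomputable def Hfun (r ψ : ℝ) : ℝ :=
  1 - (r - 1)⁻¹ * (r ^ ⌊ψ⌋)⁻¹ / (Int.fract ψ + (r - 1)⁻¹)

lemma Hfun_eq (r : ℝ) {ψ : ℝ} {k : ℤ} {s : ℝ} (h : ψ = k + s) (h0 : 0 ≤ s) (h1 : s < 1) :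
    Hfun r ψ = 1 - (r - 1)⁻¹ * (r ^ k)⁻¹ / (s + (r - 1)⁻¹) := by
  have hk : ⌊ψ⌋ = k := by
    rw [Int.floor_eq_iff]
    constructor <;> [skip; push_cast] <;> rw [h] <;> push_cast <;> linarith
  have hfr : Int.fract ψ = s := by
    rw [Int.fract, hk, h]; ring
  rw [Hfun, hk, hfr]

lemma Hfun_zero (r : ℝ) (hr : 1 < r) : Hfun r 0 = 0 := by
  have h := Hfun_eq r (ψ := 0) (k := 0) (s := 0) (by norm_num) le_rfl one_pos
  rw [h]
  have h1 : r - 1 ≠ 0 := by linarith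
  field_simp
  ring

lemma Hfun_le_one (r : ℝ) (hr : 1 < r) (ψ : ℝ) (hψ : 0 ≤ ψ) : Hfun r ψ ≤ 1 := by
  have hr0 : (0:ℝ) < r := by linarith
  have hr1 : (0:ℝ) < r - 1 := by linarith
  have h1 : (0:ℝ) < (r - 1)⁻¹ := by positivity
  have h2 : (0:ℝ) < (r ^ ⌊ψ⌋)⁻¹ := by positivity
  have h3 : (0:ℝ) < Int.fract ψ + (r - 1)⁻¹ := by
    have := Int.fract_nonneg ψ; linarith
  rw [Hfun]
  have : 0 ≤ (r - 1)⁻¹ * (r ^ ⌊ψ⌋)⁻¹ / (Int.fract ψ + (r - 1)⁻¹) := by positivity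
  linarith

lemma key_ineq (r : ℝ) (hr : 1 < r) {x y ψ : ℝ} (hx0 : 0 < x) (hx1 : x ≤ 1)
    (hy0 : 0 < y) (hy1 : y ≤ 1) (hψ : x ≤ ψ) :
    y * (Hfun r ψ - Hfun r (ψ - x)) ≤ r * x * (Hfun r (ψ + y) - Hfun r ψ) := by
  have hr0 : (0:ℝ) < r := by linarith
  have hr1 : (0:ℝ) < r - 1 := by linarith
  set β : ℝ := (r - 1)⁻¹ with hβdef
  have hβ : 0 < β := by positivity
  have hβ1 : (r - 1) * β = 1 := mul_inv_cancel₀ (by linarith)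
  set k : ℤ := ⌊ψ⌋ with hkdef
  set s : ℝ := Int.fract ψ with hsdef
  have hs0 : 0 ≤ s := Int.fract_nonneg ψ
  have hs1 : s < 1 := Int.fract_lt_one ψ
  have hψeq : ψ = (k : ℝ) + s := by
    rw [hsdef, hkdef, Int.fract]; ring
  set R : ℝ := (r ^ k)⁻¹ with hRdef
  have hRpos : 0 < R := by
    have : (0:ℝ) < r ^ k := zpow_pos hr0 k
    positivity
  have hHψ : Hfun r ψ = 1 - β * R / (s + β) := Hfun_eq r hψeq hs0 hs1
  have d1 : 0 < s + β := by linarith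
  by_cases hsy : s + y < 1
  · -- up stays in same block
    have hup : Hfun r (ψ + y) = 1 - β * R / (s + y + β) := by
      have := Hfun_eq r (ψ := ψ + y) (k := k) (s := s + y)
        (by rw [hψeq]; ring) (by linarith) hsy
      rw [this, ← hRdef]
    have d2 : 0 < s + y + β := by linarith
    by_cases hxs : x ≤ s
    · -- Case A
      have hdown : Hfun r (ψ - x) = 1 - β * R / (s - x + β) := by
        have := Hfun_eq r (ψ := ψ - x) (k := k) (s := s - x)
          (by rw [hψeq]; ring) (by linarith) (by linarith)
        rw [this, ← hRdef]
      have d3 : 0 < s - x + β := by linarith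
      rw [hHψ, hup, hdown]
      have hiden : r * x * ((1 - β * R / (s + y + β)) - (1 - β * R / (s + β)))
          - y * ((1 - β * R / (s + β)) - (1 - β * R / (s - x + β)))
          = β * R * x * y * (r * (s - x + β) - (s + y + β))
            / ((s + β) * (s + y + β) * (s - x + β)) := by
        field_simp [ne_of_gt d1, ne_of_gt d2, ne_of_gt d3]
        ring
      have hnum : 0 ≤ r * (s - x + β) - (s + y + β) := by
        nlinarith [mul_le_mul_of_nonneg_left hxs hr0.le, hβ1]
      have hfrac : 0 ≤ β * R * x * y * (r * (s - x + β) - (s + y + β))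
            / ((s + β) * (s + y + β) * (s - x + β)) := by positivity
      linarith [hiden, hfrac]
    · -- Case C
      push_neg at hxs
      have hdown : Hfun r (ψ - x) = 1 - β * (R * r) / (s + 1 - x + β) := by
        have := Hfun_eq r (ψ := ψ - x) (k := k - 1) (s := s + 1 - x)
          (by rw [hψeq]; push_cast; ring) (by linarith) (by linarith)
        rw [this, hβdef, hRdef, zpow_sub_one₀ (ne_of_gt hr0), mul_inv, inv_inv]
      have d3 : 0 < s + 1 - x + β := by linarith
      rw [hHψ, hup, hdown]
      have hiden : r * x * ((1 - β * R / (s + y + β)) - (1 - β * R / (s + β)))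
          - y * ((1 - β * R / (s + β)) - (1 - β * (R * r) / (s + 1 - x + β)))
          = β * R * y * (r * x * (s + 1 - x + β) - (r * (s + β) - (s + 1 - x + β)) * (s + y + β))
            / ((s + β) * (s + y + β) * (s + 1 - x + β)) := by
        field_simp [ne_of_gt d1, ne_of_gt d2, ne_of_gt d3]
        ring
      have hval : r * (s + β) - (s + 1 - x + β) = (r - 1) * s + x := by
        linear_combination hβ1
      have hid2 : x * (s + 1 - x + β) - β * ((r - 1) * s + x) = (1 - x) * (x - s) := by
        linear_combination (-s) * hβ1
      have hnum : 0 ≤ r * x * (s + 1 - x + β) - (r * (s + β) - (s + 1 - x + β)) * (s + y + β) := by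
        rw [hval]
        nlinarith [hid2, mul_nonneg (by nlinarith : (0:ℝ) ≤ (r - 1) * s + x) (by linarith : (0:ℝ) ≤ 1 - s - y),
          mul_nonneg (mul_nonneg hr0.le (by linarith : (0:ℝ) ≤ 1 - x)) (by linarith : (0:ℝ) ≤ x - s), hβ1]
      have hfrac : 0 ≤ β * R * y * (r * x * (s + 1 - x + β) - (r * (s + β) - (s + 1 - x + β)) * (s + y + β))
            / ((s + β) * (s + y + β) * (s + 1 - x + β)) := by positivity
      linarith [hiden, hfrac]
  · -- up crosses an integer
    push_neg at hsy
    have hup : Hfun r (ψ + y) = 1 - β * (R * r⁻¹) / (s + y - 1 + β) := by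
      have := Hfun_eq r (ψ := ψ + y) (k := k + 1) (s := s + y - 1)
        (by rw [hψeq]; push_cast; ring) (by linarith) (by linarith)
      rw [this, hβdef, hRdef, zpow_add_one₀ (ne_of_gt hr0), mul_inv]
    have hu0 : (0:ℝ) ≤ s + y - 1 := by linarith
    have d2 : 0 < s + y - 1 + β := by linarith
    by_cases hxs : x ≤ s
    · -- Case B
      have hdown : Hfun r (ψ - x) = 1 - β * R / (s - x + β) := by
        have := Hfun_eq r (ψ := ψ - x) (k := k) (s := s - x)
          (by rw [hψeq]; ring) (by linarith) (by linarith)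
        rw [this, ← hRdef]
      have d3 : 0 < s - x + β := by linarith
      rw [hHψ, hup, hdown]
      have hiden : r * x * ((1 - β * (R * r⁻¹) / (s + y - 1 + β)) - (1 - β * R / (s + β)))
          - y * ((1 - β * R / (s + β)) - (1 - β * R / (s - x + β)))
          = β * R * x * ((r * ((s + y - 1) + β) - (s + β)) * (s - x + β) - y * ((s + y - 1) + β))
            / ((s + β) * ((s + y - 1) + β) * (s - x + β)) := by
        field_simp [ne_of_gt d1, ne_of_gt d2, ne_of_gt d3, ne_of_gt hr0]
        ring
      have hq : 0 ≤ r * ((s + y - 1) + β) - (s + β) := by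
        nlinarith [hβ1, mul_nonneg hr0.le hu0]
      have hid : β * (r * ((s + y - 1) + β) - (s + β)) - y * ((s + y - 1) + β)
          = (s + y - 1) * (1 - y) := by
        linear_combination (s + y - 1 + β) * hβ1
      have hnum : 0 ≤ (r * ((s + y - 1) + β) - (s + β)) * (s - x + β) - y * ((s + y - 1) + β) := by
        nlinarith [hid, mul_nonneg hq (by linarith : (0:ℝ) ≤ s - x),
          mul_nonneg hu0 (by linarith : (0:ℝ) ≤ 1 - y)]
      have hfrac : 0 ≤ β * R * x * ((r * ((s + y - 1) + β) - (s + β)) * (s - x + β) - y * ((s + y - 1) + β))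
            / ((s + β) * ((s + y - 1) + β) * (s - x + β)) := by positivity
      linarith [hiden, hfrac]
    · -- Case D
      push_neg at hxs
      have hdown : Hfun r (ψ - x) = 1 - β * (R * r) / (s + 1 - x + β) := by
        have := Hfun_eq r (ψ := ψ - x) (k := k - 1) (s := s + 1 - x)
          (by rw [hψeq]; push_cast; ring) (by linarith) (by linarith)
        rw [this, hβdef, hRdef, zpow_sub_one₀ (ne_of_gt hr0), mul_inv, inv_inv]
      have d3 : 0 < s + 1 - x + β := by linarith
      rw [hHψ, hup, hdown]
      have hiden : r * x * ((1 - β * (R * r⁻¹) / (s + y - 1 + β)) - (1 - β * R / (s + β)))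
          - y * ((1 - β * R / (s + β)) - (1 - β * (R * r) / (s + 1 - x + β)))
          = β * R * (x * (r * ((s + y - 1) + β) - (s + β)) * (s + 1 - x + β)
              - y * (r * (s + β) - (s + 1 - x + β)) * ((s + y - 1) + β))
            / ((s + β) * ((s + y - 1) + β) * (s + 1 - x + β)) := by
        field_simp [ne_of_gt d1, ne_of_gt d2, ne_of_gt d3, ne_of_gt hr0]
        ring
      have hxy1 : (0:ℝ) ≤ x + y - 1 := by linarith
      have hvalu : r * ((s + y - 1) + β) - (s + β) = r * (s + y - 1) + 1 - s := by
        linear_combination hβ1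
      have hvald : r * (s + β) - (s + 1 - x + β) = (r - 1) * s + x := by
        linear_combination hβ1
      -- N_D = Q1 + (r-1) * Q2 with u = s+y-1
      have hidD : x * (r * (s + y - 1) + 1 - s) * (s + 1 - x + β)
            - y * ((r - 1) * s + x) * ((s + y - 1) + β)
          = ((1 - x) * y * (x + y - 1) - (s + y - 1) * (y - x))
            + (r - 1) * ((s + y - 1) * ((1 - x) * (x - s) + (1 - y) * s)) := by
        rw [hβdef]
        field_simp
        ring
      have hQ2 : 0 ≤ (s + y - 1) * ((1 - x) * (x - s) + (1 - y) * s) := by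
        nlinarith [mul_nonneg (by linarith : (0:ℝ) ≤ 1 - x) (by linarith : (0:ℝ) ≤ x - s),
          mul_nonneg (by linarith : (0:ℝ) ≤ 1 - y) hs0]
      have hQ1 : 0 ≤ (1 - x) * y * (x + y - 1) - (s + y - 1) * (y - x) := by
        rcases le_or_gt y x with hyx | hyx
        · nlinarith [mul_nonneg (mul_nonneg (by linarith : (0:ℝ) ≤ 1 - x) hy0.le) hxy1,
            mul_nonneg hu0 (by linarith : (0:ℝ) ≤ x - y)]
        · nlinarith [mul_nonneg (mul_nonneg hx0.le hxy1) (by linarith : (0:ℝ) ≤ 1 - y),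
            mul_nonneg (by linarith : (0:ℝ) ≤ x + y - 1 - (s + y - 1)) (by linarith : (0:ℝ) ≤ y - x)]
      have hnum : 0 ≤ x * (r * ((s + y - 1) + β) - (s + β)) * (s + 1 - x + β)
            - y * (r * (s + β) - (s + 1 - x + β)) * ((s + y - 1) + β) := by
        rw [hvalu, hvald, hidD]
        nlinarith [hQ1, hQ2, mul_nonneg hr1.le hQ2]
      have hfrac : 0 ≤ β * R * (x * (r * ((s + y - 1) + β) - (s + β)) * (s + 1 - x + β)
              - y * (r * (s + β) - (s + 1 - x + β)) * ((s + y - 1) + β))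
            / ((s + β) * ((s + y - 1) + β) * (s + 1 - x + β)) := by positivity
      linarith [hiden, hfrac]

lemma Hfun_small (r : ℝ) (hr : 1 < r) {ψ : ℝ} (h0 : 0 < ψ) (h1 : ψ ≤ 1) :
    Hfun r ψ = ψ / (ψ + (r - 1)⁻¹) := by
  have hr1 : (0:ℝ) < r - 1 := by linarith
  have hβ : (0:ℝ) < (r - 1)⁻¹ := by positivity
  have hd : (0:ℝ) < ψ + (r - 1)⁻¹ := by linarith
  rcases lt_or_eq_of_le h1 with h1' | h1'
  · have := Hfun_eq r (ψ := ψ) (k := 0) (s := ψ) (by norm_num) h0.le h1'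
    rw [this]
    rw [zpow_zero, inv_one, mul_one]
    field_simp
    ring
  · subst h1'
    have := Hfun_eq r (ψ := 1) (k := 1) (s := 0) (by norm_num) le_rfl one_pos
    rw [this]
    rw [zpow_one]
    have hrne : r ≠ 0 := by linarith
    field_simp
    ring

lemma exists_boundary_edge {V : Type*} [Fintype V] [DecidableEq V] (G : SimpleGraph V)
    (hconn : G.Connected) (S : Finset V) (h1 : S ≠ ∅) (h2 : S ≠ Finset.univ) :
    ∃ a ∈ S, ∃ b, b ∉ S ∧ G.Adj a b := by
  obtain ⟨a, ha⟩ := Finset.nonempty_iff_ne_empty.mpr h1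
  obtain ⟨b, hb⟩ : ∃ b, b ∉ S := by
    by_contra h
    push_neg at h
    exact h2 (Finset.eq_univ_iff_forall.mpr h)
  have aux : ∀ {u v : V} (_ : G.Walk u v), u ∈ S → v ∉ S →
      ∃ a ∈ S, ∃ b, b ∉ S ∧ G.Adj a b := by
    intro u v p
    induction p with
    | nil => intro h1' h2'; exact absurd h1' h2'
    | @cons u w v hadj p ih =>
      intro hu hv
      by_cases hw : w ∈ S
      · exact ih hw hv
      · exact ⟨u, hu, w, hw, hadj⟩
  obtain ⟨p⟩ := hconn.preconnected a b
  exact aux p ha hb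

lemma minDegree_pos {V : Type*} [Fintype V] [DecidableEq V] (G : SimpleGraph V)
    [DecidableRel G.Adj] [Nonempty V] (hconn : G.Connected)
    (hcard : 1 < Fintype.card V) : 0 < G.minDegree := by
  obtain ⟨v, hv⟩ := G.exists_minimal_degree_vertex
  rw [hv, G.degree_pos_iff_exists_adj]
  obtain ⟨u, hu⟩ := Fintype.exists_ne_of_one_lt_card hcard v
  obtain ⟨p⟩ := hconn.preconnected v u
  cases p with
  | nil => exact absurd rfl hu.symm
  | cons h q => exact ⟨_, h⟩


/-- `f` is a fixation function for the generalized Moran process on `G` with fitness `r`. -/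
def IsFixation {V : Type*} [Fintype V] [DecidableEq V] (G : SimpleGraph V)
    [DecidableRel G.Adj] (r : ℝ) (f : Finset V → ℝ) : Prop :=
  (∀ S : Finset V, 0 ≤ f S ∧ f S ≤ 1) ∧ f ∅ = 0 ∧ f Finset.univ = 1 ∧
  ∀ S : Finset V, S ≠ ∅ → S ≠ Finset.univ →
    f S * ∑ a ∈ S, ∑ b ∈ Sᶜ,
      (if G.Adj a b then r / (G.degree a : ℝ) + 1 / (G.degree b : ℝ) else 0)
    = ∑ a ∈ S, ∑ b ∈ Sᶜ,
      (if G.Adj a b then r / (G.degree a : ℝ) * f (insert b S)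
        + 1 / (G.degree b : ℝ) * f (S.erase a) else 0)

/-- The fixation probability of any connected undirected graph `G` with fitness `r > 1`
is at least `(r-1)/(r + Δ(G)/δ(G))`. -/
theorem fixation_graph_lower_bound {V : Type*} [Fintype V] [DecidableEq V] [Nonempty V]
    (G : SimpleGraph V) [DecidableRel G.Adj] (hconn : G.Connected)
    (r : ℝ) (hr : 1 < r) (f : Finset V → ℝ) (hf : IsFixation G r f) :
    (1 / (Fintype.card V : ℝ)) * ∑ v : V, f {v}
      ≥ (r - 1) / (r + (G.maxDegree : ℝ) / (G.minDegree : ℝ)) := by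
  obtain ⟨hbound, hempty, huniv, hharm⟩ := hf
  have hr1 : (0:ℝ) < r - 1 := by linarith
  have hcardpos : 0 < Fintype.card V := Fintype.card_pos
  have hratio : (0:ℝ) ≤ (G.maxDegree : ℝ) / (G.minDegree : ℝ) := by positivity
  have hden : (0:ℝ) < r + (G.maxDegree : ℝ) / (G.minDegree : ℝ) := by linarith
  rcases eq_or_lt_of_le (Nat.one_le_iff_ne_zero.mpr hcardpos.ne') with hcard | hcard
  · -- one vertex : every singleton is univ
    have huniq : ∀ v : V, ({v} : Finset V) = Finset.univ := by
      intro v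
      apply Finset.eq_univ_of_card
      rw [Finset.card_singleton, ← hcard]
    have hsum : ∑ v : V, f {v} = (Fintype.card V : ℝ) := by
      rw [Finset.sum_congr rfl (fun v _ => by rw [huniq v, huniv])]
      simp
    have hLHS : (1 / (Fintype.card V : ℝ)) * ∑ v : V, f {v} = 1 := by
      rw [hsum]
      have : (Fintype.card V : ℝ) ≠ 0 := by positivity
      field_simp
    rw [ge_iff_le, hLHS, div_le_one hden]
    linarith
  · -- main case
    set δn := G.minDegree with hδdef
    have hδ0 : 0 < δn := minDegree_pos G hconn hcard
    have hδR : (0:ℝ) < (δn:ℝ) := by exact_mod_cast hδ0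
    have hdegpos : ∀ v : V, (0:ℝ) < (G.degree v : ℝ) := by
      intro v
      have h1 : δn ≤ G.degree v := G.minDegree_le_degree v
      have : 0 < G.degree v := lt_of_lt_of_le hδ0 h1
      exact_mod_cast this
    set xw : V → ℝ := fun v => (δn : ℝ) / (G.degree v : ℝ) with hxw
    have hx0 : ∀ v, 0 < xw v := fun v => div_pos hδR (hdegpos v)
    have hx1 : ∀ v, xw v ≤ 1 := by
      intro v
      rw [hxw]
      dsimp only
      rw [div_le_one (hdegpos v)]
      exact_mod_cast G.minDegree_le_degree v
    set φf : Finset V → ℝ := fun S => ∑ v ∈ S, xw v with hφdef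
    have hφ0 : ∀ S, 0 ≤ φf S := fun S => Finset.sum_nonneg (fun v _ => (hx0 v).le)
    set g : Finset V → ℝ := fun S => Hfun r (φf S) with hgdef
    have hgempty : g ∅ = 0 := by
      rw [hgdef]
      dsimp only
      rw [show φf ∅ = 0 from Finset.sum_empty]
      exact Hfun_zero r hr
    have hgU : g Finset.univ ≤ 1 := Hfun_le_one r hr _ (hφ0 _)
    -- per-edge subharmonicity of g
    have hedge : ∀ (S : Finset V) (a b : V), a ∈ S → b ∉ S → G.Adj a b →
        (r / (G.degree a : ℝ) + 1 / (G.degree b : ℝ)) * g S ≤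
          r / (G.degree a : ℝ) * g (insert b S) + 1 / (G.degree b : ℝ) * g (S.erase a) := by
      intro S a b haS hbS hadj
      have hxa : xw a ≤ φf S := Finset.single_le_sum (fun v _ => (hx0 v).le) haS
      have hins : φf (insert b S) = φf S + xw b := by
        rw [hφdef]
        dsimp only
        rw [Finset.sum_insert hbS]
        ring
      have her : φf (S.erase a) = φf S - xw a := by
        rw [hφdef]
        dsimp only
        rw [eq_sub_iff_add_eq, Finset.sum_erase_add S _ haS]
      have hk := key_ineq r hr (hx0 a) (hx1 a) (hx0 b) (hx1 b) hxa
      rw [hgdef]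
      dsimp only
      rw [hins, her]
      have ea : r / (G.degree a : ℝ) = r * xw a / (δn : ℝ) := by
        rw [hxw]
        dsimp only
        rw [eq_div_iff hδR.ne']
        field_simp
      have eb : (1:ℝ) / (G.degree b : ℝ) = xw b / (δn : ℝ) := by
        rw [hxw]
        dsimp only
        rw [eq_div_iff hδR.ne']
        field_simp
      rw [ea, eb]
      have hk2 : xw b * (Hfun r (φf S) - Hfun r (φf S - xw a)) / (δn:ℝ)
          ≤ r * xw a * (Hfun r (φf S + xw b) - Hfun r (φf S)) / (δn:ℝ) := by
        gcongr
      have e3 : xw b * (Hfun r (φf S) - Hfun r (φf S - xw a)) / (δn:ℝ)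
          = xw b / (δn:ℝ) * Hfun r (φf S) - xw b / (δn:ℝ) * Hfun r (φf S - xw a) := by
        ring
      have e4 : r * xw a * (Hfun r (φf S + xw b) - Hfun r (φf S)) / (δn:ℝ)
          = r * xw a / (δn:ℝ) * Hfun r (φf S + xw b) - r * xw a / (δn:ℝ) * Hfun r (φf S) := by
        ring
      rw [e3, e4] at hk2
      linarith
    -- global minimum of f - g
    obtain ⟨S₀, -, hS₀⟩ := Finset.exists_min_image (Finset.univ : Finset (Finset V))
        (fun S => f S - g S) ⟨∅, Finset.mem_univ ∅⟩
    have hm : ∀ S : Finset V, f S₀ - g S₀ ≤ f S - g S := fun S => hS₀ S (Finset.mem_univ S)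
    have hm0 : 0 ≤ f S₀ - g S₀ := by
      by_contra hneg
      push_neg at hneg
      have hMne : (Finset.univ.filter (fun S : Finset V => f S - g S ≤ f S₀ - g S₀)).Nonempty :=
        ⟨S₀, by simp⟩
      obtain ⟨S₁, hS₁M, hS₁min⟩ := Finset.exists_min_image _ (fun S : Finset V => S.card) hMne
      have hS₁m : f S₁ - g S₁ = f S₀ - g S₀ :=
        le_antisymm (Finset.mem_filter.mp hS₁M).2 (hm S₁)
      have hS₁ne : S₁ ≠ ∅ := by
        intro h
        rw [h, hempty, hgempty] at hS₁m
        linarith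
      have hS₁nu : S₁ ≠ Finset.univ := by
        intro h
        rw [h, huniv] at hS₁m
        linarith [hgU]
      obtain ⟨a, haS, b, hbS, hab⟩ := exists_boundary_edge G hconn S₁ hS₁ne hS₁nu
      have hharm₁ := hharm S₁ hS₁ne hS₁nu
      have hc1 : (0:ℝ) ≤ r / (G.degree a : ℝ) := div_nonneg (by linarith) (Nat.cast_nonneg _)
      have hc2 : (0:ℝ) < 1 / (G.degree b : ℝ) := div_pos one_pos (hdegpos b)
      -- subharmonic sum for g
      have hg₁ : g S₁ * ∑ a' ∈ S₁, ∑ b' ∈ S₁ᶜ,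
            (if G.Adj a' b' then r / (G.degree a' : ℝ) + 1 / (G.degree b' : ℝ) else 0)
          ≤ ∑ a' ∈ S₁, ∑ b' ∈ S₁ᶜ,
            (if G.Adj a' b' then r / (G.degree a' : ℝ) * g (insert b' S₁)
              + 1 / (G.degree b' : ℝ) * g (S₁.erase a') else 0) := by
        rw [Finset.mul_sum]
        refine Finset.sum_le_sum (fun a' ha' => ?_)
        rw [Finset.mul_sum]
        refine Finset.sum_le_sum (fun b' hb' => ?_)
        by_cases hadj : G.Adj a' b'
        · rw [if_pos hadj, if_pos hadj]
          have := hedge S₁ a' b' ha' (Finset.mem_compl.mp hb') hadj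
          linarith
        · rw [if_neg hadj, if_neg hadj, mul_zero]
      -- the slack terms
      set T : V → V → ℝ := fun a' b' =>
        (if G.Adj a' b' then r / (G.degree a' : ℝ) * f (insert b' S₁)
            + 1 / (G.degree b' : ℝ) * f (S₁.erase a') else 0)
        - (if G.Adj a' b' then r / (G.degree a' : ℝ) * g (insert b' S₁)
            + 1 / (G.degree b' : ℝ) * g (S₁.erase a') else 0)
        - (f S₀ - g S₀) * (if G.Adj a' b' then r / (G.degree a' : ℝ) + 1 / (G.degree b' : ℝ) else 0)
        with hTdef
      have hT : ∀ a' ∈ S₁, ∀ b' ∈ S₁ᶜ, 0 ≤ T a' b' := by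
        intro a' _ b' _
        rw [hTdef]
        dsimp only
        by_cases hadj : G.Adj a' b'
        · rw [if_pos hadj, if_pos hadj, if_pos hadj]
          have hA : 0 ≤ f (insert b' S₁) - g (insert b' S₁) - (f S₀ - g S₀) := by
            have := hm (insert b' S₁); linarith
          have hB : 0 ≤ f (S₁.erase a') - g (S₁.erase a') - (f S₀ - g S₀) := by
            have := hm (S₁.erase a'); linarith
          have c1 : (0:ℝ) ≤ r / (G.degree a' : ℝ) := div_nonneg (by linarith) (Nat.cast_nonneg _)
          have c2 : (0:ℝ) ≤ 1 / (G.degree b' : ℝ) := div_nonneg zero_le_one (Nat.cast_nonneg _)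
          nlinarith [mul_nonneg c1 hA, mul_nonneg c2 hB]
        · rw [if_neg hadj, if_neg hadj, if_neg hadj]
          simp
      -- total slack is zero
      have hsum0 : ∑ a' ∈ S₁, ∑ b' ∈ S₁ᶜ, T a' b' = 0 := by
        apply le_antisymm
        · have e1 : ∑ a' ∈ S₁, ∑ b' ∈ S₁ᶜ, T a' b'
              = (∑ a' ∈ S₁, ∑ b' ∈ S₁ᶜ,
                  (if G.Adj a' b' then r / (G.degree a' : ℝ) * f (insert b' S₁)
                    + 1 / (G.degree b' : ℝ) * f (S₁.erase a') else 0))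
                - (∑ a' ∈ S₁, ∑ b' ∈ S₁ᶜ,
                  (if G.Adj a' b' then r / (G.degree a' : ℝ) * g (insert b' S₁)
                    + 1 / (G.degree b' : ℝ) * g (S₁.erase a') else 0))
                - (f S₀ - g S₀) * (∑ a' ∈ S₁, ∑ b' ∈ S₁ᶜ,
                  (if G.Adj a' b' then r / (G.degree a' : ℝ) + 1 / (G.degree b' : ℝ) else 0)) := by
            rw [hTdef]
            simp only [Finset.sum_sub_distrib, Finset.mul_sum]
          rw [e1, ← hharm₁]
          have e2 : f S₁ * (∑ a' ∈ S₁, ∑ b' ∈ S₁ᶜ,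
                  (if G.Adj a' b' then r / (G.degree a' : ℝ) + 1 / (G.degree b' : ℝ) else 0)) - (f S₀ - g S₀) * (∑ a' ∈ S₁, ∑ b' ∈ S₁ᶜ,
                  (if G.Adj a' b' then r / (G.degree a' : ℝ) + 1 / (G.degree b' : ℝ) else 0)) = g S₁ * (∑ a' ∈ S₁, ∑ b' ∈ S₁ᶜ,
                  (if G.Adj a' b' then r / (G.degree a' : ℝ) + 1 / (G.degree b' : ℝ) else 0)) := by
            linear_combination (∑ a' ∈ S₁, ∑ b' ∈ S₁ᶜ,
                  (if G.Adj a' b' then r / (G.degree a' : ℝ) + 1 / (G.degree b' : ℝ) else 0)) * hS₁m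
          linarith [hg₁, e2]
        · exact Finset.sum_nonneg (fun a' ha' => Finset.sum_nonneg (fun b' hb' => hT a' ha' b' hb'))
      have hz1 := (Finset.sum_eq_zero_iff_of_nonneg
        (fun a' ha' => Finset.sum_nonneg (fun b' hb' => hT a' ha' b' hb'))).mp hsum0 a haS
      have hbc : b ∈ S₁ᶜ := Finset.mem_compl.mpr hbS
      have hz2 := (Finset.sum_eq_zero_iff_of_nonneg (fun b' hb' => hT a haS b' hb')).mp hz1 b hbc
      rw [hTdef] at hz2
      dsimp only at hz2
      rw [if_pos hab, if_pos hab, if_pos hab] at hz2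
      have hA : 0 ≤ f (insert b S₁) - g (insert b S₁) - (f S₀ - g S₀) := by
        have := hm (insert b S₁); linarith
      have hB : 0 ≤ f (S₁.erase a) - g (S₁.erase a) - (f S₀ - g S₀) := by
        have := hm (S₁.erase a); linarith
      have hBz : f (S₁.erase a) - g (S₁.erase a) = f S₀ - g S₀ := by
        have hle : f (S₁.erase a) - g (S₁.erase a) - (f S₀ - g S₀) ≤ 0 := by
          by_contra hpos
          push_neg at hpos
          have h2 := mul_pos hc2 hpos
          nlinarith [mul_nonneg hc1 hA]
        linarith
      have herM : S₁.erase a ∈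
          Finset.univ.filter (fun S : Finset V => f S - g S ≤ f S₀ - g S₀) :=
        Finset.mem_filter.mpr ⟨Finset.mem_univ _, le_of_eq hBz⟩
      have hlt : (S₁.erase a).card < S₁.card := Finset.card_erase_lt_of_mem haS
      have := hS₁min _ herM
      omega
    -- conclusion: per-vertex bound and averaging
    have hvert : ∀ v : V, (r - 1) / (r + (G.maxDegree : ℝ) / (δn : ℝ)) ≤ f {v} := by
      intro v
      have hfg : g {v} ≤ f {v} := by have := hm {v}; linarith
      have hφv : φf {v} = xw v := by
        rw [hφdef]
        exact Finset.sum_singleton _ _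
      have hgv : g {v} = xw v / (xw v + (r - 1)⁻¹) := by
        rw [hgdef]
        dsimp only
        rw [hφv]
        exact Hfun_small r hr (hx0 v) (hx1 v)
      have hD : (0:ℝ) < (G.degree v : ℝ) := hdegpos v
      have hM : (G.degree v : ℝ) ≤ (G.maxDegree : ℝ) := by
        exact_mod_cast G.degree_le_maxDegree v
      have e5 : xw v / (xw v + (r - 1)⁻¹)
          = (δn : ℝ) * (r - 1) / ((δn : ℝ) * (r - 1) + (G.degree v : ℝ)) := by
        have hβp : (0:ℝ) < (r - 1)⁻¹ := inv_pos.mpr hr1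
        have d5a : (0:ℝ) < (δn : ℝ) / (G.degree v : ℝ) + (r - 1)⁻¹ :=
          add_pos (div_pos hδR hD) hβp
        have d5b : (0:ℝ) < (δn : ℝ) * (r - 1) + (G.degree v : ℝ) := by nlinarith
        rw [hxw]
        dsimp only
        rw [div_eq_div_iff d5a.ne' d5b.ne']
        field_simp
      have e6 : (r - 1) / (r + (G.maxDegree : ℝ) / (δn : ℝ))
          = (δn : ℝ) * (r - 1) / ((δn : ℝ) * r + (G.maxDegree : ℝ)) := by
        have hr0 : (0:ℝ) < r := by linarith
        have d6 : (0:ℝ) < (δn : ℝ) * r + (G.maxDegree : ℝ) := by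
          have : (0:ℝ) ≤ (G.maxDegree : ℝ) := Nat.cast_nonneg _
          nlinarith [mul_pos hδR hr0]
        rw [div_eq_div_iff hden.ne' d6.ne']
        field_simp
      have e7 : (δn : ℝ) * (r - 1) / ((δn : ℝ) * r + (G.maxDegree : ℝ))
          ≤ (δn : ℝ) * (r - 1) / ((δn : ℝ) * (r - 1) + (G.degree v : ℝ)) := by
        apply div_le_div_of_nonneg_left
        · positivity
        · nlinarith [hδR, hD, hr1]
        · nlinarith [hδR, hM]
      calc (r - 1) / (r + (G.maxDegree : ℝ) / (δn : ℝ))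
          = (δn : ℝ) * (r - 1) / ((δn : ℝ) * r + (G.maxDegree : ℝ)) := e6
        _ ≤ (δn : ℝ) * (r - 1) / ((δn : ℝ) * (r - 1) + (G.degree v : ℝ)) := e7
        _ = xw v / (xw v + (r - 1)⁻¹) := e5.symm
        _ = g {v} := hgv.symm
        _ ≤ f {v} := hfg
    -- averaging
    rw [ge_iff_le]
    have hsum : (Fintype.card V : ℝ) * ((r - 1) / (r + (G.maxDegree : ℝ) / (δn : ℝ)))
        ≤ ∑ v : V, f {v} := by
      calc (Fintype.card V : ℝ) * ((r - 1) / (r + (G.maxDegree : ℝ) / (δn : ℝ)))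
          = ∑ _v : V, (r - 1) / (r + (G.maxDegree : ℝ) / (δn : ℝ)) := by
            rw [Finset.sum_const, Finset.card_univ, nsmul_eq_mul]
        _ ≤ ∑ v : V, f {v} := Finset.sum_le_sum (fun v _ => hvert v)
    have hn : (0:ℝ) < (Fintype.card V : ℝ) := by exact_mod_cast hcardpos
    rw [show (r - 1) / (r + (G.maxDegree : ℝ) / (δn : ℝ))
        = 1 / (Fintype.card V : ℝ) * ((Fintype.card V : ℝ)
          * ((r - 1) / (r + (G.maxDegree : ℝ) / (δn : ℝ)))) by field_simp]
    apply mul_le_mul_of_nonneg_left hsum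
    positivity
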